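/- Let A be a type (the alphabet), Q a finite type (the states), δ : Q → A → Q a transition function, q₀ ∈ Q, and let α : ℕ → A be a disjunctive word, meaning: for every finite word w : List A, the set of positions n such that α(n + k) = w(k) for all k < |w| is infinite. Define the run by run(0) = q₀ and run(n+1) = δ (run n) (α n), and let I := {q ∈ Q : run(n) = q for infinitely many n}. Then: (i) I is nonempty; (ii) I is closed under all transitions, i.e., for every q ∈ I and every a ∈ A, δ q a ∈ I; and (iii) I is strongly connected, i.e., for all p, q ∈ I there exists a finite word u : List A with List.foldl δ p u = q. -/

import Mathlib

set_option linter.unusedSectionVars false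

section AuxDisj
variable {A Q : Type*} [Fintype Q] (δ : Q → A → Q) (α : ℕ → A) (run : ℕ → Q)

lemma aux_run_foldl (hrunS : ∀ n, run (n + 1) = δ (run n) (α n)) :
    ∀ (w : List A) (n : ℕ), (∀ (k : ℕ) (hk : k < w.length), α (n + k) = w[k]'hk) →
      run (n + w.length) = List.foldl δ (run n) w := by
  intro w
  induction w with
  | nil => intro n _; simp
  | cons a t ih =>
    intro n h
    have ha : α n = a := by exact h 0 (by simp)
    have ht : ∀ (k : ℕ) (hk : k < t.length), α ((n + 1) + k) = t[k]'hk := by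
      intro k hk
      have := h (k + 1) (by simp; omega)
      simpa [Nat.add_assoc, Nat.add_comm 1 k] using this
    have e : n + (a :: t).length = (n + 1) + t.length := by simp [List.length_cons]; omega
    rw [e, ih (n + 1) ht, List.foldl_cons, hrunS n, ha]

lemma aux_segment (hrunS : ∀ n, run (n + 1) = δ (run n) (α n)) :
    ∀ (d m : ℕ), ∃ u : List A, List.foldl δ (run m) u = run (m + d) := by
  intro d
  induction d with
  | zero => intro m; exact ⟨[], by simp⟩
  | succ d ih =>
    intro m
    obtain ⟨u, hu⟩ := ih m
    exact ⟨u ++ [α (m + d)], by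
      rw [List.foldl_append, hu]
      simp [← hrunS (m + d), ← Nat.add_assoc]⟩

lemma aux_pigeon (S : Set ℕ) (hS : S.Infinite) :
    ∃ p : Q, {n | n ∈ S ∧ run n = p}.Infinite := by
  by_contra h
  push_neg at h
  have hsub : S ⊆ ⋃ p : Q, {n | n ∈ S ∧ run n = p} :=
    fun n hn => Set.mem_iUnion.2 ⟨run n, hn, rfl⟩
  exact hS (Set.Finite.subset (Set.finite_iUnion h) hsub)

lemma aux_prefix (u v : List A) (n : ℕ)
    (h : ∀ (k : ℕ) (hk : k < (u ++ v).length), α (n + k) = (u ++ v)[k]'hk) :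
    ∀ (k : ℕ) (hk : k < u.length), α (n + k) = u[k]'hk := by
  intro k hk
  have := h k (by simp; omega)
  rwa [List.getElem_append_left] at this

end AuxDisj

/-- The set of states visited infinitely often by the run of a deterministic
automaton on a disjunctive word is nonempty, closed under all transitions, and
strongly connected (i.e., it is a bottom SCC). -/
theorem run_on_disjunctive_word_inf_states
    (A : Type*) (Q : Type*) [Fintype Q]
    (δ : Q → A → Q) (q₀ : Q) (α : ℕ → A)
    (hdisj : ∀ w : List A,
      {n : ℕ | ∀ (k : ℕ) (hk : k < w.length), α (n + k) = w[k]'hk}.Infinite)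
    (run : ℕ → Q) (hrun0 : run 0 = q₀)
    (hrunS : ∀ n, run (n + 1) = δ (run n) (α n))
    (I : Set Q) (hI : I = {q : Q | {n : ℕ | run n = q}.Infinite}) :
    I.Nonempty ∧
    (∀ q ∈ I, ∀ a : A, δ q a ∈ I) ∧
    (∀ p ∈ I, ∀ q ∈ I, ∃ u : List A, List.foldl δ p u = q) := by
  subst hI
  have pigeon : ∀ w : List A, ∃ p : Q,
      {n | (∀ (k : ℕ) (hk : k < w.length), α (n + k) = w[k]'hk) ∧ run n = p}.Infinite := by
    intro w
    obtain ⟨p, hp⟩ := aux_pigeon run _ (hdisj w)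
    exact ⟨p, hp⟩
  -- strong connectivity
  have hconn : ∀ p : Q, {n | run n = p}.Infinite → ∀ q : Q, {n | run n = q}.Infinite →
      ∃ u : List A, List.foldl δ p u = q := by
    intro p hp q hq
    obtain ⟨m, hm⟩ := hp.nonempty
    obtain ⟨n, hn, hmn⟩ := hq.exists_gt m
    obtain ⟨u, hu⟩ := aux_segment δ α run hrunS (n - m) m
    refine ⟨u, ?_⟩
    rw [Set.mem_setOf_eq] at hm hn
    rw [hm] at hu
    have e : m + (n - m) = n := by omega
    rw [e, hn] at hu
    exact hu
  -- nonempty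
  have hne : ({q : Q | {n : ℕ | run n = q}.Infinite}).Nonempty := by
    obtain ⟨p, hp⟩ := pigeon []
    exact ⟨p, hp.mono fun n hn => hn.2⟩
  refine ⟨hne, ?_, fun p hp q hq => hconn p hp q hq⟩
  -- closure under transitions
  intro q hq a
  rw [Set.mem_setOf_eq] at hq
  set Bad : List A → Set Q := fun w =>
    {p | {n | (∀ (k : ℕ) (hk : k < w.length), α (n + k) = w[k]'hk) ∧ run n = p}.Infinite ∧
      ¬ ∃ u v, w = u ++ a :: v ∧ List.foldl δ p u = q} with hBad
  have finish : ∀ (w : List A) (p : Q),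
      {n | (∀ (k : ℕ) (hk : k < w.length), α (n + k) = w[k]'hk) ∧ run n = p}.Infinite →
      (∃ u v, w = u ++ a :: v ∧ List.foldl δ p u = q) →
      {n | run n = δ q a}.Infinite := by
    rintro w p hS ⟨u, v, hw, hu⟩
    subst hw
    have hinj : Function.Injective (fun n : ℕ => n + (u.length + 1)) := fun x y h => by
      simpa using h
    refine (hS.image hinj.injOn).mono ?_
    rintro m ⟨n, ⟨hocc, hrn⟩, rfl⟩
    have h1 : run (n + u.length) = q := by
      rw [aux_run_foldl δ α run hrunS u n (aux_prefix α u (a :: v) n hocc), hrn, hu]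
    have h2 : α (n + u.length) = a := by
      have := hocc u.length (by simp)
      simpa [List.getElem_append_right] using this
    show run (n + (u.length + 1)) = δ q a
    rw [← Nat.add_assoc, hrunS (n + u.length), h1, h2]
  have key : ∀ (m : ℕ) (w : List A), (Bad w).ncard ≤ m → {n | run n = δ q a}.Infinite := by
    intro m
    induction m with
    | zero =>
      intro w hcard
      obtain ⟨p, hp⟩ := pigeon w
      have hempty : Bad w = ∅ :=
        (Set.ncard_eq_zero (Set.toFinite _)).mp (Nat.le_zero.mp hcard)
      have hnotbad : p ∉ Bad w := by rw [hempty]; exact Set.notMem_empty p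
      have hhits : ∃ u v, w = u ++ a :: v ∧ List.foldl δ p u = q := by
        by_contra hc
        exact hnotbad ⟨hp, hc⟩
      exact finish w p hp hhits
    | succ m ih =>
      intro w hcard
      obtain ⟨p, hp⟩ := pigeon w
      by_cases hhits : ∃ u v, w = u ++ a :: v ∧ List.foldl δ p u = q
      · exact finish w p hp hhits
      · have hpbad : p ∈ Bad w := ⟨hp, hhits⟩
        have hr : {n | run n = List.foldl δ p w}.Infinite := by
          have hinj : Function.Injective (fun n : ℕ => n + w.length) := fun x y h => by
            simpa using h
          refine (hp.image hinj.injOn).mono ?_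
          rintro m' ⟨n, ⟨hocc, hrn⟩, rfl⟩
          show run (n + w.length) = _
          rw [aux_run_foldl δ α run hrunS w n hocc, hrn]
        obtain ⟨v, hv⟩ := hconn (List.foldl δ p w) hr q hq
        have hsub : Bad (w ++ (v ++ [a])) ⊆ Bad w \ {p} := by
          rintro p' ⟨hinf', hnh'⟩
          refine ⟨⟨hinf'.mono fun n hn => ⟨aux_prefix α w (v ++ [a]) n hn.1, hn.2⟩, ?_⟩, ?_⟩
          · rintro ⟨u, v₀, hwu, hfu⟩
            exact hnh' ⟨u, v₀ ++ (v ++ [a]), by rw [hwu]; simp, hfu⟩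
          · simp only [Set.mem_singleton_iff]
            rintro rfl
            exact hnh' ⟨w ++ v, [], by simp, by rw [List.foldl_append, hv]⟩
        have hc2 : (Bad (w ++ (v ++ [a]))).ncard ≤ m := by
          have h1 : (Bad (w ++ (v ++ [a]))).ncard ≤ (Bad w \ {p}).ncard :=
            Set.ncard_le_ncard hsub (Set.toFinite _)
          have h2 : (Bad w \ {p}).ncard < (Bad w).ncard :=
            Set.ncard_diff_singleton_lt_of_mem hpbad (Set.toFinite _)
          omega
        exact ih (w ++ (v ++ [a])) hc2
  exact key ((Bad []).ncard) [] le_rfl
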